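/- Let X be a random variable with the exponential distribution with rate 1 (density e^{−x} on (0,∞)), let f(x) = exp(x/2), and let k be a positive integer. Then √e · ∑_{i=1}^{2k−1} (1/2^i) · ∑_{j=0}^{i} (−1)^{i−j} / (i−j)! ≤ E[exp(X/2)] − exp(E[X]/2) ≤ ∑_{i=1}^{2k−1} ∑_{j=0}^{i} 2^{1−j} · (−1)^{i−j+1} / j!, where moreover E[exp(X/2)] − exp(E[X]/2) = 2 − √e. -/

import Mathlib

open MeasureTheory ProbabilityTheory Finset
open scoped NNReal ENNReal

/-- Let `X` be a random variable with the exponential distribution with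
rate `1`, let `f(x) = exp(x/2)`, and let `k ≥ 1`. Then
`√e·∑_{i=1}^{2k−1} (1/2^i)·∑_{j=0}^{i} (−1)^{i−j}/(i−j)! ≤ E[exp(X/2)] − exp(E[X]/2)
  ≤ ∑_{i=1}^{2k−1} ∑_{j=0}^{i} 2^{1−j}·(−1)^{i−j+1}/j!`,
and moreover `E[exp(X/2)] − exp(E[X]/2) = 2 − √e`. -/
private noncomputable def Aa (n : ℕ) : ℝ := ∑ j ∈ Finset.range n, (-1:ℝ)^j / (Nat.factorial j)
private noncomputable def Bb (n : ℕ) : ℝ := ∑ j ∈ Finset.range n, (-(1/2):ℝ)^j / (Nat.factorial j)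

private lemma fact_le (n : ℕ) : (Nat.factorial n : ℝ) ≤ (Nat.factorial (n+1) : ℝ) := by
  exact_mod_cast Nat.factorial_le (Nat.le_succ n)

private lemma fact_pos (n : ℕ) : (0:ℝ) < (Nat.factorial n : ℝ) := by
  exact_mod_cast Nat.factorial_pos n

private lemma neg_one_pow_even (m : ℕ) : (-1:ℝ)^(2*m) = 1 := by
  rw [pow_mul]; norm_num

private lemma neg_one_pow_odd (m : ℕ) : (-1:ℝ)^(2*m+1) = -1 := by
  rw [pow_succ, neg_one_pow_even]; norm_num

private lemma Aa_nonneg (n : ℕ) : 0 ≤ Aa n := by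
  have key : ∀ m, 0 ≤ Aa (2*m) := by
    intro m
    induction m with
    | zero => simp [Aa]
    | succ m ih =>
      have h2 : 2*(m+1) = (2*m) + 1 + 1 := by ring
      rw [h2]
      unfold Aa at *
      rw [Finset.sum_range_succ, Finset.sum_range_succ]
      have h3 := fact_le (2*m)
      have h4 := fact_pos (2*m)
      have h5 := fact_pos (2*m+1)
      have h6 : (1:ℝ)/(Nat.factorial (2*m+1)) ≤ 1/(Nat.factorial (2*m)) :=
        one_div_le_one_div_of_le h4 h3
      rw [neg_one_pow_even, neg_one_pow_odd]
      have e1 : (-1:ℝ) / (Nat.factorial (2*m+1)) = -(1 / (Nat.factorial (2*m+1))) := by ring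
      rw [e1]
      linarith [ih, h6]
  rcases Nat.even_or_odd n with ⟨m, hm⟩ | ⟨m, hm⟩
  · subst hm; simpa [two_mul] using key m
  · subst hm
    have := key m
    unfold Aa at *
    rw [Finset.sum_range_succ, neg_one_pow_even]
    have h7 : (0:ℝ) < 1 / (Nat.factorial (2*m)) := by positivity
    linarith

private lemma hasSum_exp_div (x : ℝ) :
    HasSum (fun n => x ^ n / (Nat.factorial n : ℝ)) (Real.exp x) := by
  rw [Real.exp_eq_exp_ℝ]
  exact NormedSpace.expSeries_div_hasSum_exp x

private lemma Bb_even_le (m : ℕ) : Bb (2*m) ≤ Real.exp (-(1/2)) := by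
  have hmono : Monotone (fun m => Bb (2*m)) := by
    apply monotone_nat_of_le_succ
    intro m
    have h2 : 2*(m+1) = (2*m) + 1 + 1 := by ring
    simp only [Bb, h2]
    rw [Finset.sum_range_succ, Finset.sum_range_succ]
    have h3 := fact_le (2*m)
    have h4 := fact_pos (2*m)
    have h5 := fact_pos (2*m+1)
    have he : (-(1/2):ℝ)^(2*m) = (1/2)^(2*m) := by
      rw [neg_pow, neg_one_pow_even]; ring
    have ho : (-(1/2):ℝ)^(2*m+1) = -((1/2)^(2*m+1)) := by
      rw [neg_pow, neg_one_pow_odd]; ring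
    rw [he, ho]
    have hp : ((1/2:ℝ))^(2*m+1) ≤ (1/2)^(2*m) := by
      apply pow_le_pow_of_le_one (by norm_num) (by norm_num) (by omega)
    have hq : ((1/2:ℝ))^(2*m+1) / (Nat.factorial (2*m+1)) ≤ (1/2)^(2*m) / (Nat.factorial (2*m)) := by
      gcongr
    have : -((1/2:ℝ)^(2*m+1)) / (Nat.factorial (2*m+1)) = -((1/2)^(2*m+1) / (Nat.factorial (2*m+1))) := by ring
    rw [this]
    linarith
  have htend : Filter.Tendsto (fun m => Bb (2*m)) Filter.atTop (nhds (Real.exp (-(1/2)))) := by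
    have h1 := (hasSum_exp_div (-(1/2))).tendsto_sum_nat
    have h2 : Filter.Tendsto (fun m => 2*m) Filter.atTop Filter.atTop :=
      Filter.tendsto_atTop_mono (fun n => by simp; omega) Filter.tendsto_id
    exact h1.comp h2
  exact hmono.ge_of_tendsto htend m

private lemma identL (n : ℕ) :
    ∑ i ∈ Finset.Icc 1 n, (1 / (2:ℝ)^i) * Aa (i+1) = 2 * Bb (n+1) - Aa (n+1) / 2^n - 1 := by
  induction n with
  | zero => simp [Aa, Bb]; norm_num
  | succ n ih =>
    rw [Finset.sum_Icc_succ_top (by omega), ih]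
    have hA : Aa (n+1+1) = Aa (n+1) + (-1)^(n+1) / (Nat.factorial (n+1)) := by
      simp [Aa, Finset.sum_range_succ]
    have hB : Bb (n+1+1) = Bb (n+1) + (-(1/2))^(n+1) / (Nat.factorial (n+1)) := by
      simp [Bb, Finset.sum_range_succ]
    have hneg : (-(1/2):ℝ)^(n+1) = (-1)^(n+1) / 2^(n+1) := by
      rw [neg_pow, neg_pow, div_pow]; ring_nf
    rw [hA, hB, hneg, pow_succ]
    have := fact_pos (n+1)
    have h2 : ((2:ℝ)^n) ≠ 0 := by positivity
    field_simp
    ring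

private lemma innerU (i : ℕ) :
    ∑ j ∈ Finset.range (i+1), (2:ℝ) ^ ((1:ℤ) - (j:ℤ)) * (-1:ℝ) ^ (i - j + 1) / (Nat.factorial j : ℝ)
      = 2 * (-1:ℝ)^(i+1) * Bb (i+1) := by
  unfold Bb
  rw [Finset.mul_sum]
  apply Finset.sum_congr rfl
  intro j hj
  have hji : j ≤ i := Nat.lt_succ_iff.mp (Finset.mem_range.mp hj)
  have hsq : ((-1:ℝ)^j) * ((-1:ℝ)^j) = 1 := by
    rw [← pow_add, ← two_mul, pow_mul]; norm_num
  have h1 : (-1:ℝ)^(i-j+1) * (-1:ℝ)^j = (-1)^(i+1) := by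
    rw [← pow_add]; congr 1; omega
  have h2 : (-1:ℝ)^(i-j+1) = (-1)^(i+1) * (-1)^j := by
    calc (-1:ℝ)^(i-j+1) = (-1)^(i-j+1) * (((-1:ℝ)^j) * ((-1:ℝ)^j)) := by rw [hsq, mul_one]
    _ = ((-1:ℝ)^(i-j+1) * (-1:ℝ)^j) * (-1)^j := by ring
    _ = (-1)^(i+1) * (-1)^j := by rw [h1]
  have h3 : (2:ℝ) ^ ((1:ℤ) - (j:ℤ)) = 2 / 2^j := by
    rw [zpow_sub₀ (two_ne_zero), zpow_one, zpow_natCast]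
  have h4 : (-(1/2):ℝ)^j = (-1)^j / 2^j := by
    rw [neg_pow, div_pow]; ring_nf
  rw [h2, h3, h4]
  ring

private lemma identU (m : ℕ) :
    ∑ i ∈ Finset.Icc 1 (2*m+1), 2 * (-1:ℝ)^(i+1) * Bb (i+1)
      = 2 - 2 * ∑ j ∈ Finset.range (m+1), (1/2:ℝ)^(2*j+1) / (Nat.factorial (2*j+1)) := by
  induction m with
  | zero =>
    simp [Bb, Finset.sum_range_succ]
    norm_num
  | succ m ih =>
    have h1 : 2*(m+1)+1 = (2*m+1) + 1 + 1 := by ring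
    rw [h1, Finset.sum_Icc_succ_top (by omega), Finset.sum_Icc_succ_top (by omega), ih,
      Finset.sum_range_succ (fun j => (1/2:ℝ)^(2*j+1) / (Nat.factorial (2*j+1) : ℝ)) (m+1)]
    have hB1 : Bb (2*m+1+1+1) = Bb (2*m+1+1) + (-(1/2))^(2*m+2) / (Nat.factorial (2*m+2)) := by
      simp [Bb, Finset.sum_range_succ]
    have hB2 : Bb (2*m+1+1+1+1) = Bb (2*m+1+1) + (-(1/2))^(2*m+2) / (Nat.factorial (2*m+2))
        + (-(1/2))^(2*m+3) / (Nat.factorial (2*m+3)) := by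
      simp [Bb, Finset.sum_range_succ]
    have he1 : ((-1:ℝ))^(2*m+1+1+1) = -1 := by
      have : 2*m+1+1+1 = 2*(m+1)+1 := by ring
      rw [this, neg_one_pow_odd]
    have he2 : ((-1:ℝ))^(2*m+1+1+1+1) = 1 := by
      have : 2*m+1+1+1+1 = 2*(m+2) := by ring
      rw [this, neg_one_pow_even]
    have he3 : (-(1/2):ℝ)^(2*m+3) = -((1/2)^(2*m+3)) := by
      have : 2*m+3 = 2*(m+1)+1 := by ring
      rw [this, neg_pow, neg_one_pow_odd]; ring
    have he4 : 2*(m+1)+1 = 2*m+3 := by ring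
    rw [hB1, hB2, he1, he2, he3, he4]
    ring

private lemma sum_odd_le (m : ℕ) :
    2 * ∑ j ∈ Finset.range (m+1), (1/2:ℝ)^(2*j+1) / (Nat.factorial (2*j+1))
      ≤ Real.exp (1/2) := by
  have h1 : ∀ j : ℕ, 2 * ((1/2:ℝ)^(2*j+1) / (Nat.factorial (2*j+1)))
      ≤ (1/2:ℝ)^(2*j) / (Nat.factorial (2*j)) := by
    intro j
    have h2 : 2 * ((1/2:ℝ)^(2*j+1)) = (1/2)^(2*j) := by rw [pow_succ]; ring
    have h3 := fact_le (2*j)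
    have h4 := fact_pos (2*j)
    have h5 := fact_pos (2*j+1)
    rw [mul_div_assoc', h2]
    gcongr
  calc 2 * ∑ j ∈ Finset.range (m+1), (1/2:ℝ)^(2*j+1) / (Nat.factorial (2*j+1))
      = ∑ j ∈ Finset.range (m+1), 2 * ((1/2:ℝ)^(2*j+1) / (Nat.factorial (2*j+1))) := by
        rw [Finset.mul_sum]
    _ ≤ ∑ j ∈ Finset.range (m+1), (1/2:ℝ)^(2*j) / (Nat.factorial (2*j)) :=
        Finset.sum_le_sum (fun j _ => h1 j)
    _ = ∑ i ∈ (Finset.range (m+1)).image (fun j => 2*j), (1/2:ℝ)^i / (Nat.factorial i) := by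
        rw [Finset.sum_image (by intro a _ b _ h; simp only at h; omega)]
    _ ≤ ∑ i ∈ Finset.range (2*m+2), (1/2:ℝ)^i / (Nat.factorial i) := by
        apply Finset.sum_le_sum_of_subset_of_nonneg
        · intro x hx
          simp only [Finset.mem_image, Finset.mem_range] at hx ⊢
          omega
        · intro i _ _
          positivity
    _ ≤ Real.exp (1/2) := Real.sum_le_exp_of_nonneg (by norm_num) _

private lemma integral_expMeasure_one (g : ℝ → ℝ) (hg : Measurable g) :
    ∫ x, g x ∂(expMeasure 1) = ∫ x in Set.Ioi (0:ℝ), Real.exp (-x) * g x := by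
  have hpdf : ∀ x : ℝ, gammaPDFReal 1 1 x = (Set.Ici (0:ℝ)).indicator (fun x => Real.exp (-x)) x := by
    intro x
    unfold gammaPDFReal
    rw [Set.indicator_apply]
    by_cases hx : (0:ℝ) ≤ x
    · rw [if_pos hx, if_pos (by exact hx)]
      rw [Real.one_rpow, Real.Gamma_one, sub_self, Real.rpow_zero, one_mul]
      norm_num
    · rw [if_neg hx, if_neg (by exact hx)]
  have hmeas : Measurable fun x => ((Set.Ici (0:ℝ)).indicator (fun x => Real.exp (-x)) x).toNNReal :=
    (Measurable.indicator (by fun_prop) measurableSet_Ici).real_toNNReal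
  calc ∫ x, g x ∂(expMeasure 1)
      = ∫ x, g x ∂(volume.withDensity (fun x =>
          ((((Set.Ici (0:ℝ)).indicator (fun x => Real.exp (-x)) x).toNNReal : ℝ≥0) : ℝ≥0∞))) := by
        congr 1
        show gammaMeasure 1 1 = _
        unfold gammaMeasure
        congr 1
        funext x
        rw [show gammaPDF 1 1 x = ENNReal.ofReal (gammaPDFReal 1 1 x) from rfl, hpdf x]
        rfl
    _ = ∫ x, ((Set.Ici (0:ℝ)).indicator (fun x => Real.exp (-x)) x).toNNReal • g x := by
        rw [integral_withDensity_eq_integral_smul hmeas]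
    _ = ∫ x, (Set.Ici (0:ℝ)).indicator (fun x => Real.exp (-x) * g x) x := by
        congr 1
        funext x
        rw [NNReal.smul_def, smul_eq_mul, Real.coe_toNNReal', Set.indicator_apply,
          Set.indicator_apply]
        by_cases hx : x ∈ Set.Ici (0:ℝ)
        · rw [if_pos hx, if_pos hx, max_eq_left (Real.exp_nonneg _)]
        · rw [if_neg hx, if_neg hx]
          simp
    _ = ∫ x in Set.Ici (0:ℝ), Real.exp (-x) * g x := integral_indicator measurableSet_Ici
    _ = ∫ x in Set.Ioi (0:ℝ), Real.exp (-x) * g x := integral_Ici_eq_integral_Ioi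

private lemma int_exp_half : ∫ x in Set.Ioi (0:ℝ), Real.exp (-x) * Real.exp (x/2) = 2 := by
  have h := Real.integral_rpow_mul_exp_neg_mul_Ioi (a := 1) (r := 1/2) one_pos (by norm_num)
  have h2 : ∫ x in Set.Ioi (0:ℝ), Real.exp (-x) * Real.exp (x/2)
      = ∫ t in Set.Ioi (0:ℝ), t ^ ((1:ℝ)-1) * Real.exp (-(1/2*t)) := by
    refine integral_congr_ae (Filter.Eventually.of_forall fun x => ?_)
    simp only [sub_self, Real.rpow_zero, one_mul, ← Real.exp_add]
    ring_nf
  rw [h2, h, Real.Gamma_one]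
  norm_num

private lemma int_mean : ∫ x in Set.Ioi (0:ℝ), Real.exp (-x) * x = 1 := by
  have h := (Real.Gamma_eq_integral (s := 2) (by norm_num)).symm
  have h2 : ∫ x in Set.Ioi (0:ℝ), Real.exp (-x) * x
      = ∫ x in Set.Ioi (0:ℝ), Real.exp (-x) * x ^ ((2:ℝ)-1) := by
    refine integral_congr_ae (Filter.Eventually.of_forall fun x => ?_)
    norm_num
  rw [h2, h, Real.Gamma_two]

theorem jensen_gap_exp_exponential_distribution
    {Ω : Type*} [MeasurableSpace Ω] (P : Measure Ω) [IsProbabilityMeasure P]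
    (k : ℕ) (hk : 0 < k)
    (X : Ω → ℝ) (hX : Measurable X)
    (hmap : P.map X = expMeasure 1) :
    (Real.sqrt (Real.exp 1) *
        ∑ i ∈ Finset.Icc 1 (2 * k - 1), (1 / (2 : ℝ) ^ i) *
          ∑ j ∈ Finset.range (i + 1), (-1 : ℝ) ^ (i - j) / (Nat.factorial (i - j) : ℝ)
      ≤ (∫ ω, Real.exp (X ω / 2) ∂P) - Real.exp ((∫ ω, X ω ∂P) / 2)) ∧
    ((∫ ω, Real.exp (X ω / 2) ∂P) - Real.exp ((∫ ω, X ω ∂P) / 2)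
      ≤ ∑ i ∈ Finset.Icc 1 (2 * k - 1), ∑ j ∈ Finset.range (i + 1),
          (2 : ℝ) ^ ((1 : ℤ) - (j : ℤ)) * (-1 : ℝ) ^ (i - j + 1) / (Nat.factorial j : ℝ)) ∧
    ((∫ ω, Real.exp (X ω / 2) ∂P) - Real.exp ((∫ ω, X ω ∂P) / 2)
      = 2 - Real.sqrt (Real.exp 1)) := by
  obtain ⟨m, rfl⟩ : ∃ m, k = m + 1 := ⟨k - 1, by omega⟩
  have hn : 2 * (m + 1) - 1 = 2 * m + 1 := by omega
  rw [hn]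
  have key : ∀ g : ℝ → ℝ, Measurable g →
      ∫ ω, g (X ω) ∂P = ∫ x in Set.Ioi (0:ℝ), Real.exp (-x) * g x := by
    intro g hg
    rw [← integral_map hX.aemeasurable hg.aestronglyMeasurable, hmap,
      integral_expMeasure_one g hg]
  have h1 : ∫ ω, Real.exp (X ω / 2) ∂P = 2 := by
    have h := key (fun x => Real.exp (x / 2)) (by fun_prop)
    simpa [int_exp_half] using h
  have h2 : ∫ ω, X ω ∂P = 1 := by
    have h := key (fun x => x) measurable_id
    simpa [int_mean] using h
  have hsq : Real.sqrt (Real.exp 1) = Real.exp (1/2) := by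
    rw [← Real.exp_half]
  have hgap : (∫ ω, Real.exp (X ω / 2) ∂P) - Real.exp ((∫ ω, X ω ∂P) / 2)
      = 2 - Real.exp (1/2) := by
    rw [h1, h2]
  have hE : (0:ℝ) < Real.exp (1/2) := Real.exp_pos _
  have hrefl : ∀ i : ℕ, ∑ j ∈ Finset.range (i + 1),
      (-1 : ℝ) ^ (i - j) / (Nat.factorial (i - j) : ℝ) = Aa (i+1) := by
    intro i
    have h := Finset.sum_range_reflect (fun j => (-1:ℝ)^j / (Nat.factorial j : ℝ)) (i+1)
    unfold Aa
    rw [← h]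
    simp
  refine ⟨?_, ?_, by rw [hgap, hsq]⟩
  · rw [hgap, hsq]
    have hL : ∑ i ∈ Finset.Icc 1 (2*m+1), (1 / (2 : ℝ) ^ i) *
        ∑ j ∈ Finset.range (i + 1), (-1 : ℝ) ^ (i - j) / (Nat.factorial (i - j) : ℝ)
        = 2 * Bb (2*m+1+1) - Aa (2*m+1+1) / 2^(2*m+1) - 1 := by
      rw [← identL]
      exact Finset.sum_congr rfl (fun i _ => by rw [hrefl i])
    rw [hL]
    have hB : Bb (2*m+1+1) ≤ Real.exp (-(1/2)) := by
      have := Bb_even_le (m+1)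
      have he : 2*(m+1) = 2*m+1+1 := by ring
      rwa [he] at this
    have hinv : Real.exp (1/2) * Real.exp (-(1/2)) = 1 := by
      rw [← Real.exp_add]; norm_num
    have h5 : Real.exp (1/2) * Bb (2*m+1+1) ≤ Real.exp (1/2) * Real.exp (-(1/2)) := by
      gcongr
    have h6 : 0 ≤ Real.exp (1/2) * (Aa (2*m+1+1) / 2^(2*m+1)) :=
      mul_nonneg hE.le (div_nonneg (Aa_nonneg _) (by positivity))
    have hexpand : Real.exp (1/2) * (2 * Bb (2*m+1+1) - Aa (2*m+1+1) / 2^(2*m+1) - 1)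
        = 2 * (Real.exp (1/2) * Bb (2*m+1+1))
          - Real.exp (1/2) * (Aa (2*m+1+1) / 2^(2*m+1)) - Real.exp (1/2) := by ring
    rw [hexpand]
    linarith [h5, h6, hinv]
  · rw [hgap]
    have hU : ∑ i ∈ Finset.Icc 1 (2*m+1), ∑ j ∈ Finset.range (i + 1),
        (2 : ℝ) ^ ((1 : ℤ) - (j : ℤ)) * (-1 : ℝ) ^ (i - j + 1) / (Nat.factorial j : ℝ)
        = 2 - 2 * ∑ j ∈ Finset.range (m+1), (1/2:ℝ)^(2*j+1) / (Nat.factorial (2*j+1)) := by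
      rw [← identU]
      exact Finset.sum_congr rfl (fun i _ => innerU i)
    rw [hU]
    linarith [sum_odd_le m]
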